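/- arXiv:1801.05910 — 2 statements merged into one kernel-verified Lean document; each statement's English description precedes it below -/
import Mathlib

section
/- For all n ≥ 3, (j³ₙ)² − 9·(J³ₙ)² = 2^(n+2)·j³ₙ₋₃, where J³ₙ and j³ₙ are the third-order Jacobsthal and Jacobsthal-Lucas numbers. -/
def J3 : ℕ → ℤ
  | 0 => 0
  | 1 => 1
  | 2 => 1
  | n + 3 => J3 (n + 2) + J3 (n + 1) + 2 * J3 n

def j3 : ℕ → ℤ
  | 0 => 2
  | 1 => 1
  | 2 => 5
  | n + 3 => j3 (n + 2) + j3 (n + 1) + 2 * j3 n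

def V3 (n : ℕ) : ℤ := if n % 3 = 0 then 2 else if n % 3 = 1 then -3 else 1

lemma Vshift (n : ℕ) : V3 (n + 3) = V3 n := by
  simp [V3, Nat.add_mod]

lemma Vrec (n : ℕ) : V3 (n + 3) = V3 (n + 2) + V3 (n + 1) + 2 * V3 n := by
  have h : n % 3 = 0 ∨ n % 3 = 1 ∨ n % 3 = 2 := by omega
  rcases h with h | h | h <;>
  · have h1 : (n + 1) % 3 = (n % 3 + 1) % 3 := by omega
    have h2 : (n + 2) % 3 = (n % 3 + 2) % 3 := by omega
    have h3 : (n + 3) % 3 = n % 3 := by omega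
    simp [V3, h1, h2, h3, h]

lemma hJ : ∀ n, 7 * J3 n = 2 ^ (n + 1) - V3 n := by
  intro n
  induction n using Nat.strong_induction_on with
  | _ n ih =>
    match n with
    | 0 => decide
    | 1 => decide
    | 2 => decide
    | m + 3 =>
      have i0 := ih m (by omega)
      have i1 := ih (m + 1) (by omega)
      have i2 := ih (m + 2) (by omega)
      have hv := Vrec m
      rw [J3]
      rw [show m + 3 + 1 = m + 4 from rfl]
      rw [show (2:ℤ) ^ (m + 4) = 2^(m+3) + 2^(m+2) + 2 * 2^(m+1) by ring]
      linarith

lemma hj : ∀ n, 7 * j3 n = 2 ^ (n + 3) + 3 * V3 n := by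
  intro n
  induction n using Nat.strong_induction_on with
  | _ n ih =>
    match n with
    | 0 => decide
    | 1 => decide
    | 2 => decide
    | m + 3 =>
      have i0 := ih m (by omega)
      have i1 := ih (m + 1) (by omega)
      have i2 := ih (m + 2) (by omega)
      have hv := Vrec m
      rw [j3]
      rw [show m + 3 + 3 = m + 6 from rfl]
      rw [show (2:ℤ) ^ (m + 6) = 2^(m+5) + 2^(m+4) + 2 * 2^(m+3) by ring]
      linarith

theorem stmt_8 : ∀ n : ℕ, 3 ≤ n →
    (j3 n) ^ 2 - 9 * (J3 n) ^ 2 = 2 ^ (n + 2) * j3 (n - 3) := by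
  intro n hn
  obtain ⟨m, rfl⟩ : ∃ m, n = m + 3 := ⟨n - 3, by omega⟩
  simp only [Nat.add_sub_cancel]
  have hJn := hJ (m + 3)
  have hjn := hj (m + 3)
  have hjm := hj m
  have hv := Vshift m
  have key : (49 : ℤ) * ((j3 (m+3))^2 - 9 * (J3 (m+3))^2) =
      49 * (2 ^ (m + 3 + 2) * j3 m) := by
    have e1 : (49:ℤ) * ((j3 (m+3))^2 - 9 * (J3 (m+3))^2)
        = (7 * j3 (m+3))^2 - 9 * (7 * J3 (m+3))^2 := by ring
    have e2 : (49:ℤ) * (2 ^ (m + 3 + 2) * j3 m)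
        = 7 * 2 ^ (m + 5) * (7 * j3 m) := by ring
    rw [e1, e2, hJn, hjn, hjm, hv]
    rw [show (2:ℤ)^(m+3+3) = 8 * 2^(m+3) from by ring,
        show (2:ℤ)^(m+3+1) = 2 * 2^(m+3) from by ring,
        show (2:ℤ)^(m+5) = 4 * 2^(m+3) from by ring]
    ring
  exact mul_left_cancel₀ (by norm_num) key
end

section
/- For all m ≥ 0, the dual third-order Jacobsthal and Jacobsthal-Lucas quaternions satisfy jN_{m+3} − 3·JN_{m+3} = 2·jN_m. -/
noncomputable section

abbrev DualQ := TrivSqZeroExt ℝ (Fin 3 → ℝ)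

def qi : DualQ := TrivSqZeroExt.inr (Pi.single 0 1)
def qj : DualQ := TrivSqZeroExt.inr (Pi.single 1 1)
def qk : DualQ := TrivSqZeroExt.inr (Pi.single 2 1)

def JN (m : ℕ) : DualQ :=
  (J3 m : DualQ) + (J3 (m + 1) : DualQ) * qi + (J3 (m + 2) : DualQ) * qj + (J3 (m + 3) : DualQ) * qk

def jN (m : ℕ) : DualQ :=
  (j3 m : DualQ) + (j3 (m + 1) : DualQ) * qi + (j3 (m + 2) : DualQ) * qj + (j3 (m + 3) : DualQ) * qk

def conjJN (m : ℕ) : DualQ :=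
  (J3 m : DualQ) - (J3 (m + 1) : DualQ) * qi - (J3 (m + 2) : DualQ) * qj - (J3 (m + 3) : DualQ) * qk

def conjjN (m : ℕ) : DualQ :=
  (j3 m : DualQ) - (j3 (m + 1) : DualQ) * qi - (j3 (m + 2) : DualQ) * qj - (j3 (m + 3) : DualQ) * qk

def VN (m : ℕ) : DualQ :=
  (V3 m : DualQ) + (V3 (m + 1) : DualQ) * qi + (V3 (m + 2) : DualQ) * qj + (V3 (m + 3) : DualQ) * qk

lemma key : ∀ n, j3 (n + 3) - 3 * J3 (n + 3) = 2 * j3 n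
  | 0 => by simp [J3, j3]
  | 1 => by simp [J3, j3]
  | 2 => by simp [J3, j3]
  | n + 3 => by
    have h0 := key n
    have h1 := key (n + 1)
    have h2 := key (n + 2)
    have hJ : J3 (n + 3 + 3) = J3 (n + 2 + 3) + J3 (n + 1 + 3) + 2 * J3 (n + 3) := rfl
    have hj : j3 (n + 3 + 3) = j3 (n + 2 + 3) + j3 (n + 1 + 3) + 2 * j3 (n + 3) := rfl
    have hj' : j3 (n + 3) = j3 (n + 2) + j3 (n + 1) + 2 * j3 n := rfl
    rw [hJ, hj, hj']
    linarith

theorem stmt_14 : ∀ m : ℕ, jN (m + 3) - 3 * JN (m + 3) = 2 * jN m := by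
  intro m
  simp only [jN, JN]
  have c : ∀ s, (j3 (m + 3 + s) : DualQ) = 3 * (J3 (m + 3 + s) : DualQ) + 2 * (j3 (m + s) : DualQ) := by
    intro s
    have h := key (m + s)
    have : j3 (m + s + 3) = 3 * J3 (m + s + 3) + 2 * j3 (m + s) := by linarith
    rw [show m + 3 + s = m + s + 3 by omega, this]
    push_cast
    ring
  have c0 := c 0
  have c1 := c 1
  have c2 := c 2
  have c3 := c 3
  simp only [Nat.add_zero] at c0
  rw [show m + 3 + 1 = m + 1 + 3 from rfl] at c1 ⊢
  rw [show m + 3 + 2 = m + 2 + 3 from rfl] at c2 ⊢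
  rw [show m + 3 + 3 = m + 3 + 3 from rfl] at c3
  rw [c3, c1, c2, c0]
  ring
end
end
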